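/- arXiv:1811.03355 — 3 statements merged into one kernel-verified Lean document; each statement's English description precedes it below -/
import Mathlib

section
/- Let Δ be a finitary argumentation framework and X ⊆ A admissible. If ⋃_{k < ω} d^k(X) = ⋂_{k < ω} d^k(n(X)), then this common set is a stable extension of Δ that includes X. -/
variable {A : Type*}

/-- The defense function of an argumentation framework with attack relation `r`. -/
def defense (r : A → A → Prop) (X : Set A) : Set A :=
  {x | ∀ y, r y x → ∃ z ∈ X, r z y}

/-- The neutrality function. -/
def neut (r : A → A → Prop) (X : Set A) : Set A :=
  {x | ¬ ∃ y ∈ X, r y x}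

/-- A framework is finitary if every argument has finitely many attackers. -/
def Finitary (r : A → A → Prop) : Prop := ∀ x, {y | r y x}.Finite

lemma defense_eq_neut_neut (r : A → A → Prop) (Y : Set A) :
    defense r Y = neut r (neut r Y) := by
  ext x
  simp only [defense, neut, Set.mem_setOf_eq]
  constructor
  · rintro h ⟨y, hyn, hyx⟩; exact hyn (h y hyx)
  · intro h y hyx
    by_contra hc
    exact h ⟨y, hc, hyx⟩

lemma neut_antitone (r : A → A → Prop) {Y Z : Set A} (h : Y ⊆ Z) :
    neut r Z ⊆ neut r Y := by
  intro x hx ⟨y, hy, hr⟩; exact hx ⟨y, h hy, hr⟩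

lemma defense_mono (r : A → A → Prop) {Y Z : Set A} (h : Y ⊆ Z) :
    defense r Y ⊆ defense r Z := by
  intro x hx y hy
  obtain ⟨z, hz, hr⟩ := hx y hy
  exact ⟨z, h hz, hr⟩

lemma iterate_defense_neut (r : A → A → Prop) (Y : Set A) (k : ℕ) :
    (defense r)^[k] (neut r Y) = neut r ((defense r)^[k] Y) := by
  induction k with
  | zero => rfl
  | succ k ih =>
    rw [Function.iterate_succ_apply', Function.iterate_succ_apply', ih,
      defense_eq_neut_neut, defense_eq_neut_neut]

theorem streams_converge_stable (r : A → A → Prop) (hfin : Finitary r)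
    (X : Set A) (hcf : X ⊆ neut r X) (hdef : X ⊆ defense r X)
    (heq : (⋃ k, (defense r)^[k] X) = ⋂ k, (defense r)^[k] (neut r X)) :
    (⋃ k, (defense r)^[k] X) = neut r (⋃ k, (defense r)^[k] X) ∧
      X ⊆ ⋃ k, (defense r)^[k] X := by
  set d := defense r
  -- each iterate is admissible
  have hadm : ∀ k, d^[k] X ⊆ neut r (d^[k] X) ∧ d^[k] X ⊆ d (d^[k] X) := by
    intro k
    induction k with
    | zero => exact ⟨hcf, hdef⟩
    | succ k ih =>
      obtain ⟨hcf', hdef'⟩ := ih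
      rw [Function.iterate_succ_apply']
      constructor
      · rintro x hx ⟨y, hy, hr⟩
        obtain ⟨z, hz, hrz⟩ := hx y hr
        obtain ⟨w, hw, hrw⟩ := hy z hrz
        exact hcf' hz ⟨w, hw, hrw⟩
      · exact defense_mono r hdef'
  have hchain : ∀ {i k : ℕ}, i ≤ k → d^[i] X ⊆ d^[k] X := by
    intro i k h
    induction k with
    | zero => simp_all
    | succ k ih =>
      rcases Nat.lt_or_ge i (k+1) with h' | h'
      · rw [Function.iterate_succ_apply']
        exact (ih (Nat.lt_succ_iff.mp h')).trans (hadm k).2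
      · have : i = k + 1 := le_antisymm h h'
        subst this; exact subset_rfl
  have hsub : X ⊆ ⋃ k, d^[k] X := Set.subset_iUnion (fun k => d^[k] X) 0
  refine ⟨Set.Subset.antisymm ?_ ?_, hsub⟩
  · -- U ⊆ n U
    rintro x hx ⟨y, hy, hr⟩
    obtain ⟨_, ⟨i, rfl⟩, hxi⟩ := hx
    obtain ⟨_, ⟨j, rfl⟩, hyj⟩ := hy
    have hxk := hchain (Nat.le_max_left i j) hxi
    have hyk := hchain (Nat.le_max_right i j) hyj
    exact (hadm (max i j)).1 hxk ⟨y, hyk, hr⟩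
  · -- n U ⊆ U
    intro x hx
    rw [heq]
    refine Set.mem_iInter.mpr fun k => ?_
    rw [iterate_defense_neut]
    exact neut_antitone r (Set.subset_iUnion (fun k => d^[k] X) k) hx
end

section
/- Let Δ be a finitary argumentation framework, m, n positive integers with n ≥ m, and X ⊆ A with X ⊆ d_{m,n}(X) and X ⊆ n_m(X). Then ⋃_{k < ω} d_{m,n}^k(X) is the least fixpoint of d_{m,n} containing X. -/
variable {A : Type*}

/-- Graded neutrality: arguments with fewer than `ℓ` attackers in `X`. -/
def grNeut (r : A → A → Prop) (ℓ : ℕ) (X : Set A) : Set A :=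
  {x | {y ∈ X | r y x}.encard < (ℓ : ℕ∞)}

/-- Graded defense: arguments with fewer than `m` attackers that have
fewer than `n` counter-attackers in `X`. -/
def grDef (r : A → A → Prop) (m n : ℕ) (X : Set A) : Set A :=
  {x | {y | r y x ∧ {z ∈ X | r z y}.encard < (n : ℕ∞)}.encard < (m : ℕ∞)}

lemma grDef_mono (r : A → A → Prop) (m n : ℕ) : Monotone (grDef r m n) := by
  intro X Y hXY x hx
  refine lt_of_le_of_lt (Set.encard_mono ?_) hx
  intro y hy
  have hzz : {z ∈ X | r z y} ⊆ {z ∈ Y | r z y} := fun z hz => ⟨hXY hz.1, hz.2⟩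
  exact ⟨hy.1, lt_of_le_of_lt (Set.encard_mono hzz) hy.2⟩

lemma finite_subset_iUnion {C : ℕ → Set A} (hC : Monotone C) {S : Set A}
    (hS : S.Finite) (h : S ⊆ ⋃ k, C k) : ∃ k, S ⊆ C k := by
  induction S, hS using Set.Finite.induction_on with
  | empty => exact ⟨0, by simp⟩
  | insert ha hs ih =>
    rename_i a s
    obtain ⟨k, hk⟩ := ih (fun z hz => h (Set.mem_insert_of_mem a hz))
    obtain ⟨j, hj⟩ := Set.mem_iUnion.1 (h (Set.mem_insert a s))
    refine ⟨max j k, ?_⟩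
    rintro z (rfl | hz)
    · exact hC (le_max_left j k) hj
    · exact hC (le_max_right j k) (hk hz)

theorem graded_iUnion_iterates_lfp (r : A → A → Prop) (hfin : Finitary r)
    (m n : ℕ) (hm : 0 < m) (hn : 0 < n) (hnm : m ≤ n)
    (X : Set A) (hdef : X ⊆ grDef r m n X) (hcf : X ⊆ grNeut r m X) :
    grDef r m n (⋃ k, (grDef r m n)^[k] X) = ⋃ k, (grDef r m n)^[k] X ∧
      X ⊆ ⋃ k, (grDef r m n)^[k] X ∧
      ∀ Z, grDef r m n Z = Z → X ⊆ Z → (⋃ k, (grDef r m n)^[k] X) ⊆ Z := by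
  set d := grDef r m n with hd
  have hmono := grDef_mono r m n
  -- the chain is monotone
  have hchain : Monotone (fun k => d^[k] X) := by
    apply monotone_nat_of_le_succ
    intro k
    induction k with
    | zero => simpa using hdef
    | succ k ih =>
      rw [Function.iterate_succ', Function.iterate_succ']
      exact hmono ih
  set U := ⋃ k, d^[k] X with hU
  have hsub : ∀ k, d^[k] X ⊆ U := fun k => Set.subset_iUnion (fun k => d^[k] X) k
  have hXU : X ⊆ U := hsub 0
  -- U ⊆ d U
  have h1 : U ⊆ d U := by
    intro x hx
    obtain ⟨k, hk⟩ := Set.mem_iUnion.1 hx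
    have : x ∈ d^[k+1] X := hchain (Nat.le_succ k) hk
    rw [Function.iterate_succ'] at this
    exact hmono (hsub k) this
  -- d U ⊆ U
  have h2 : d U ⊆ U := by
    intro x hx
    -- bad attackers: those with ≥ n counter-attackers in U
    classical
    have hFfin : {y | r y x}.Finite := hfin x
    set B := {y | r y x ∧ ¬ {z ∈ U | r z y}.encard < (n : ℕ∞)} with hB
    have hBfin : B.Finite := hFfin.subset fun y hy => hy.1
    -- for each bad attacker, pick a stage where it already has ≥ n counter-attackers
    have hstage : ∀ y ∈ B, ∃ k, ¬ {z ∈ d^[k] X | r z y}.encard < (n : ℕ∞) := by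
      intro y hy
      have hSfin : {z ∈ U | r z y}.Finite := (hfin y).subset fun z hz => hz.2
      obtain ⟨k, hk⟩ := finite_subset_iUnion hchain hSfin (fun z hz => hz.1)
      refine ⟨k, fun hlt => hy.2 ?_⟩
      have hzz : {z ∈ U | r z y} ⊆ {z ∈ d^[k] X | r z y} := fun z hz => ⟨hk hz, hz.2⟩
      exact lt_of_le_of_lt (Set.encard_mono hzz) hlt
    choose f hf using hstage
    set K := hBfin.toFinset.sup (fun y => if h : y ∈ B then f y h else 0) with hK
    have hfK : ∀ y (hy : y ∈ B), f y hy ≤ K := by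
      intro y hy
      have := Finset.le_sup (f := fun y => if h : y ∈ B then f y h else 0)
        (hBfin.mem_toFinset.2 hy)
      simpa [dif_pos hy] using this
    have hxK : x ∈ d (d^[K] X) := by
      refine lt_of_le_of_lt (Set.encard_mono ?_) hx
      intro y hy
      refine ⟨hy.1, ?_⟩
      by_contra hnot
      have hyB : y ∈ B := ⟨hy.1, hnot⟩
      have : ¬ {z ∈ d^[f y hyB] X | r z y}.encard < (n : ℕ∞) := hf y hyB
      have hzz : {z ∈ d^[f y hyB] X | r z y} ⊆ {z ∈ d^[K] X | r z y} :=
        fun z hz => ⟨hchain (hfK y hyB) hz.1, hz.2⟩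
      exact this (lt_of_le_of_lt (Set.encard_mono hzz) hy.2)
    have : x ∈ d^[K+1] X := by
      rw [Function.iterate_succ']; exact hxK
    exact hsub (K+1) this
  refine ⟨Set.Subset.antisymm h2 h1, hXU, ?_⟩
  intro Z hZ hXZ
  refine Set.iUnion_subset fun k => ?_
  induction k with
  | zero => simpa using hXZ
  | succ k ih =>
    rw [Function.iterate_succ']
    calc d (d^[k] X) ⊆ d Z := hmono ih
    _ = Z := hZ
end

section
/- Let Δ be a finitary argumentation framework and ℓ, m, n positive integers with n ≥ m and ℓ ≥ m. If X ⊆ A satisfies X ⊆ n_ℓ(X), X ⊆ n_m(X) and X ⊆ d_{m,n}(X), then ⋃_{k < ω} d_{m,n}^k(X) is the smallest ℓmn-complete extension containing X; in particular (taking X = ∅) the ℓmn-grounded extension ⋃_{k < ω} d_{m,n}^k(∅) exists. -/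
variable {A : Type*}

section Aux

variable {r : A → A → Prop} {m n : ℕ}

lemma grDef_mono_s17 {X Y : Set A} (h : X ⊆ Y) : grDef r m n X ⊆ grDef r m n Y := by
  intro x hx
  refine lt_of_le_of_lt (Set.encard_mono ?_) hx
  rintro y ⟨hyx, hy⟩
  refine ⟨hyx, lt_of_le_of_lt (Set.encard_mono ?_) hy⟩
  rintro z ⟨hz1, hz2⟩
  exact ⟨h hz1, hz2⟩

lemma grDef_key (hnm : m ≤ n) {Y Z : Set A}
    (hZ : ∀ y ∈ Z, ({w ∈ Y | r w y} : Set A).encard < (n : ℕ∞))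
    {x : A} (hx : x ∈ grDef r m n Y) :
    ({y ∈ Z | r y x} : Set A).encard < (m : ℕ∞) := by
  refine lt_of_le_of_lt (Set.encard_mono ?_) hx
  rintro y ⟨hyZ, hyx⟩
  exact ⟨hyx, hZ y hyZ⟩

lemma grDef_chain_succ {X : Set A} (hdef : X ⊆ grDef r m n X) (k : ℕ) :
    (grDef r m n)^[k] X ⊆ (grDef r m n)^[k + 1] X := by
  induction k with
  | zero => simpa using hdef
  | succ k ih =>
      rw [Function.iterate_succ_apply', Function.iterate_succ_apply']
      exact grDef_mono_s17 ih

lemma grDef_chain {X : Set A} (hdef : X ⊆ grDef r m n X) {j k : ℕ} (h : j ≤ k) :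
    (grDef r m n)^[j] X ⊆ (grDef r m n)^[k] X := by
  induction k with
  | zero => simp_all
  | succ k ih =>
      rcases Nat.lt_or_ge j (k + 1) with h' | h'
      · exact (ih (Nat.lt_succ_iff.mp h')).trans (grDef_chain_succ hdef k)
      · have : j = k + 1 := le_antisymm h h'
        subst this; exact subset_rfl

lemma grDef_neut (hnm : m ≤ n) {X : Set A} (hcfm : X ⊆ grNeut r m X)
    (k : ℕ) : ∀ x ∈ (grDef r m n)^[k] X,
    ({y ∈ (grDef r m n)^[k] X | r y x} : Set A).encard < (m : ℕ∞) := by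
  induction k with
  | zero => intro x hx; exact hcfm hx
  | succ k ih =>
      have hcast : (m : ℕ∞) ≤ (n : ℕ∞) := Nat.cast_le.mpr hnm
      intro x hx
      rw [Function.iterate_succ_apply'] at hx ⊢
      have h1 : ∀ y ∈ grDef r m n ((grDef r m n)^[k] X),
          ({w ∈ (grDef r m n)^[k] X | r w y} : Set A).encard < (n : ℕ∞) := by
        intro y hy
        exact lt_of_lt_of_le
          (grDef_key hnm (fun z hz => lt_of_lt_of_le (ih z hz) hcast) hy) hcast
      exact grDef_key hnm h1 hx

lemma exists_level {X : Set A} (hdef : X ⊆ grDef r m n X) {F : Set A} (hF : F.Finite)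
    (hFU : F ⊆ ⋃ k, (grDef r m n)^[k] X) : ∃ K, F ⊆ (grDef r m n)^[K] X := by
  classical
  have h : ∀ x, ∃ k, x ∈ F → x ∈ (grDef r m n)^[k] X := by
    intro x
    by_cases hx : x ∈ F
    · obtain ⟨k, hk⟩ := Set.mem_iUnion.1 (hFU hx)
      exact ⟨k, fun _ => hk⟩
    · exact ⟨0, fun h => absurd h hx⟩
  choose g hg using h
  refine ⟨hF.toFinset.sup g, fun x hx => ?_⟩
  exact grDef_chain hdef (Finset.le_sup (hF.mem_toFinset.mpr hx)) (hg x hx)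

theorem grDef_main (r : A → A → Prop) (hfin : Finitary r)
    (ℓ m n : ℕ) (hnm : m ≤ n) (hlm : m ≤ ℓ)
    (X : Set A) (hcfm : X ⊆ grNeut r m X) (hdef : X ⊆ grDef r m n X) :
    ((⋃ k, (grDef r m n)^[k] X) ⊆ grNeut r ℓ (⋃ k, (grDef r m n)^[k] X) ∧
      grDef r m n (⋃ k, (grDef r m n)^[k] X) = ⋃ k, (grDef r m n)^[k] X ∧
      X ⊆ ⋃ k, (grDef r m n)^[k] X ∧
      ∀ E, grDef r m n E = E → X ⊆ E →
        (⋃ k, (grDef r m n)^[k] X) ⊆ E) := by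
  set d := grDef r m n with hd
  set U := ⋃ k, d^[k] X with hU
  have hmemU : ∀ {x : A}, x ∈ U ↔ ∃ k, x ∈ d^[k] X := fun {x} => Set.mem_iUnion
  have hsubU : ∀ k, d^[k] X ⊆ U := fun k x hx => hmemU.mpr ⟨k, hx⟩
  -- ℓ-conflict-freeness of U
  have hneut : U ⊆ grNeut r ℓ U := by
    intro x hx
    obtain ⟨k, hk⟩ := hmemU.mp hx
    have hfinatt : ({y ∈ U | r y x} : Set A).Finite :=
      (hfin x).subset fun y hy => hy.2
    obtain ⟨K, hK⟩ := exists_level hdef hfinatt (fun y hy => hy.1)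
    have hxK : x ∈ d^[max k K] X := grDef_chain hdef (le_max_left _ _) hk
    have h2 : ({y ∈ d^[max k K] X | r y x} : Set A).encard < (m : ℕ∞) :=
      grDef_neut hnm hcfm (max k K) x hxK
    have h3 : ({y ∈ U | r y x} : Set A).encard < (m : ℕ∞) := by
      refine lt_of_le_of_lt (Set.encard_mono ?_) h2
      rintro y ⟨hyU, hyx⟩
      exact ⟨grDef_chain hdef (le_max_right k K) (hK ⟨hyU, hyx⟩), hyx⟩
    exact lt_of_lt_of_le h3 (Nat.cast_le.mpr hlm)
  -- fixed point
  have hfix : d U = U := by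
    apply Set.Subset.antisymm
    · intro x hx
      -- find K such that attackers of x with ≥ n counter-attackers in U
      -- already have them in d^[K] X
      have h : ∀ y, ∃ K, ({z ∈ U | r z y} : Set A) ⊆ d^[K] X := by
        intro y
        exact exists_level hdef ((hfin y).subset fun z hz => hz.2)
          (fun z hz => hz.1)
      choose g hg using h
      classical
      set K := (hfin x).toFinset.sup g with hKdef
      have hxK : x ∈ d^[K + 1] X := by
        rw [Function.iterate_succ_apply']
        refine lt_of_le_of_lt (Set.encard_mono ?_) hx
        rintro y ⟨hyx, hy⟩
        refine ⟨hyx, ?_⟩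
        refine lt_of_le_of_lt (Set.encard_mono ?_) hy
        rintro z ⟨hzU, hzy⟩
        have : z ∈ d^[K] X :=
          grDef_chain hdef (Finset.le_sup ((hfin x).mem_toFinset.mpr hyx))
            (hg y ⟨hzU, hzy⟩)
        exact ⟨this, hzy⟩
      exact hsubU _ hxK
    · intro x hx
      obtain ⟨k, hk⟩ := hmemU.mp hx
      have h1 := grDef_chain_succ hdef k hk
      rw [Function.iterate_succ_apply'] at h1
      exact grDef_mono_s17 (hsubU k) h1
  refine ⟨hneut, hfix, hsubU 0, ?_⟩
  intro E hE hXE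
  have hall : ∀ k, d^[k] X ⊆ E := by
    intro k
    induction k with
    | zero => exact hXE
    | succ k ih =>
        rw [Function.iterate_succ_apply']
        intro x hx
        have h2 : x ∈ grDef r m n E := grDef_mono_s17 ih hx
        exact hE.subset h2
  exact fun x hx => (hmemU.mp hx).elim fun k hk => hall k hk

end Aux

theorem graded_smallest_complete_and_grounded (r : A → A → Prop) (hfin : Finitary r)
    (ℓ m n : ℕ) (hm : 0 < m) (hnm : m ≤ n) (hlm : m ≤ ℓ)
    (X : Set A) (hl : X ⊆ grNeut r ℓ X) (hcfm : X ⊆ grNeut r m X)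
    (hdef : X ⊆ grDef r m n X) :
    ((⋃ k, (grDef r m n)^[k] X) ⊆ grNeut r ℓ (⋃ k, (grDef r m n)^[k] X) ∧
      grDef r m n (⋃ k, (grDef r m n)^[k] X) = ⋃ k, (grDef r m n)^[k] X ∧
      X ⊆ ⋃ k, (grDef r m n)^[k] X ∧
      ∀ E, E ⊆ grNeut r ℓ E → grDef r m n E = E → X ⊆ E →
        (⋃ k, (grDef r m n)^[k] X) ⊆ E) ∧
    ((⋃ k, (grDef r m n)^[k] (∅ : Set A)) ⊆
        grNeut r ℓ (⋃ k, (grDef r m n)^[k] (∅ : Set A)) ∧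
      grDef r m n (⋃ k, (grDef r m n)^[k] (∅ : Set A)) =
        ⋃ k, (grDef r m n)^[k] (∅ : Set A) ∧
      ∀ E, E ⊆ grNeut r ℓ E → grDef r m n E = E →
        (⋃ k, (grDef r m n)^[k] (∅ : Set A)) ⊆ E) := by
  obtain ⟨h1, h2, h3, h4⟩ := grDef_main r hfin ℓ m n hnm hlm X hcfm hdef
  obtain ⟨g1, g2, g3, g4⟩ := grDef_main r hfin ℓ m n hnm hlm (∅ : Set A)
    (Set.empty_subset _) (Set.empty_subset _)
  exact ⟨⟨h1, h2, h3, fun E _ hE hXE => h4 E hE hXE⟩,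
    g1, g2, fun E _ hE => g4 E hE (Set.empty_subset _)⟩
end
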